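/- Let k be a field, n ≥ 1, a₁,...,a_m ∈ k pairwise distinct, c₁,...,c_m positive integers, and G = {g₁,...,g_r} a finite subset of k[x₁,...,xₙ]. Then the ideal of k[x₁,...,xₙ] generated by {∏_{j=1}^m (x₁ − a_j)^{c_j}} ∪ G equals the intersection over j = 1,...,m of the ideals generated by {(x₁ − a_j)^{c_j}} ∪ G. -/

import Mathlib

open MvPolynomial

/-- For comaximal ideals, sup distributes over their intersection. -/
theorem inf_sup_of_comaximal {R : Type*} [CommRing R] {I I' J : Ideal R}
    (h : I ⊔ I' = ⊤) : (I ⊓ I') ⊔ J = (I ⊔ J) ⊓ (I' ⊔ J) := by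
  refine le_antisymm (le_inf (sup_le_sup_right inf_le_left _)
    (sup_le_sup_right inf_le_right _)) ?_
  have htop : (I ⊔ J) ⊔ (I' ⊔ J) = ⊤ := by
    rw [eq_top_iff, ← h]
    exact sup_le (le_sup_of_le_left le_sup_left) (le_sup_of_le_right le_sup_left)
  rw [← Ideal.mul_eq_inf_of_coprime htop]
  calc (I ⊔ J) * (I' ⊔ J) = I * I' ⊔ I * J ⊔ (J * I' ⊔ J * J) := by
        rw [Ideal.sup_mul, Ideal.mul_sup, Ideal.mul_sup]
    _ ≤ (I ⊓ I') ⊔ J := by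
        refine sup_le (sup_le ?_ ?_) (sup_le ?_ ?_)
        · exact le_sup_of_le_left Ideal.mul_le_inf
        · exact le_sup_of_le_right Ideal.mul_le_right
        · exact le_sup_of_le_right Ideal.mul_le_left
        · exact le_sup_of_le_right Ideal.mul_le_right

theorem finset_inf_sup_of_comaximal {R : Type*} [CommRing R] {ι : Type*}
    (s : Finset ι) (I : ι → Ideal R) (J : Ideal R)
    (h : Set.Pairwise (↑s) fun i j => I i ⊔ I j = ⊤) :
    (⨅ i ∈ s, I i) ⊔ J = ⨅ i ∈ s, (I i ⊔ J) := by
  classical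
  induction s using Finset.induction_on with
  | empty => simp
  | insert b s ha ih =>
    rw [Finset.iInf_insert, Finset.iInf_insert]
    have hcomax : I b ⊔ ⨅ i ∈ s, I i = ⊤ := by
      refine Ideal.sup_iInf_eq_top fun i hi => ?_
      exact h (Finset.mem_insert_self b s)
        (Finset.mem_insert_of_mem hi) (fun e => ha (e ▸ hi))
    rw [inf_sup_of_comaximal hcomax,
      ih (h.mono (Finset.coe_subset.mpr (Finset.subset_insert b s)))]

theorem iInf_sup_of_comaximal {R : Type*} [CommRing R] {ι : Type*} [Fintype ι]
    (I : ι → Ideal R) (J : Ideal R)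
    (h : ∀ i j, i ≠ j → I i ⊔ I j = ⊤) :
    (⨅ i, I i) ⊔ J = ⨅ i, (I i ⊔ J) := by
  simpa using finset_inf_sup_of_comaximal Finset.univ I J
    (by simpa [Set.pairwise_univ] using (show Pairwise fun i j => I i ⊔ I j = ⊤ from fun i j hij => h i j hij))

/-- Equation (1): for pairwise distinct `a₁,…,a_m ∈ k`, positive exponents `c₁,…,c_m`, and a
finite set `G ⊆ k[x₁,…,xₙ]` (here `n + 1 ≥ 1` variables),
`⟨∏ⱼ (x₁ - aⱼ)^{cⱼ}, G⟩ = ⋂ⱼ ⟨(x₁ - aⱼ)^{cⱼ}, G⟩`. -/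
theorem span_prod_eq_iInf {k : Type*} [Field k] (n m : ℕ)
    (a : Fin m → k) (ha : Function.Injective a)
    (c : Fin m → ℕ) (hc : ∀ j, 0 < c j)
    (G : Finset (MvPolynomial (Fin (n + 1)) k)) :
    Ideal.span (insert (∏ j, (X 0 - C (a j)) ^ c j)
        (G : Set (MvPolynomial (Fin (n + 1)) k))) =
      ⨅ j : Fin m, Ideal.span (insert ((X 0 - C (a j)) ^ c j)
        (G : Set (MvPolynomial (Fin (n + 1)) k))) := by
  have hcop : ∀ i j : Fin m, i ≠ j →
      IsCoprime ((X 0 - C (a i)) ^ c i) ((X (R := k) (0 : Fin (n+1)) - C (a j)) ^ c j) := by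
    intro i j hij
    have hne : a j - a i ≠ 0 := sub_ne_zero.mpr fun e => hij (ha e).symm
    refine IsCoprime.pow ⟨C (a j - a i)⁻¹, - C (a j - a i)⁻¹, ?_⟩
    have h1 : C (a j - a i)⁻¹ * (X (R := k) (0 : Fin (n+1)) - C (a i)) +
        -C (a j - a i)⁻¹ * (X 0 - C (a j)) = C (a j - a i)⁻¹ * C (a j - a i) := by
      rw [map_sub]; ring
    rw [h1, ← map_mul, inv_mul_cancel₀ hne, map_one]
  have key : ∀ j : Fin m, Ideal.span (insert ((X 0 - C (a j)) ^ c j)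
      (G : Set (MvPolynomial (Fin (n + 1)) k))) =
      Ideal.span {((X 0 - C (a j)) ^ c j)} ⊔ Ideal.span (G : Set _) := fun j => by
    rw [Ideal.span_insert]
  have key0 : Ideal.span (insert (∏ j, (X 0 - C (a j)) ^ c j)
      (G : Set (MvPolynomial (Fin (n + 1)) k))) =
      Ideal.span {∏ j, (X 0 - C (a j)) ^ c j} ⊔ Ideal.span (G : Set _) := by
    rw [Ideal.span_insert]
  rw [key0, ← Ideal.iInf_span_singleton hcop]
  simp_rw [key]
  exact iInf_sup_of_comaximal _ _ fun i j hij =>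
    (Ideal.sup_eq_top_iff_isCoprime _ _).mpr (hcop i j hij)
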